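/- For every prior 𝒟 there exists an efficient signaling scheme Z whose revenue equals the Myerson revenue: R(Z) = R^My = max_{v ∈ {v₁,…,vₙ}} v·G_𝒟(v). -/

import Mathlib

open Finset MeasureTheory

namespace PD

noncomputable section

/-- Complementary CDF of a mass function `fS` at value `v i`. -/
def G {n : ℕ} (v fS : Fin n → ℝ) (i : Fin n) : ℝ :=
  ∑ j ∈ Finset.univ.filter (fun j => v i ≤ v j), fS j

/-- A signal is a probability mass function on the values. -/
def IsSignal {n : ℕ} (fS : Fin n → ℝ) : Prop :=
  (∀ i, 0 ≤ fS i) ∧ ∑ i, fS i = 1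

/-- The index of the seller's price: the smallest index maximizing `v i * G i`. -/
def priceIdx {n : ℕ} [NeZero n] (v fS : Fin n → ℝ) : Fin n :=
  (Finset.univ.filter (fun i => ∀ j, v j * G v fS j ≤ v i * G v fS i)).min' (by
    haveI : Nonempty (Fin n) := ⟨⟨0, Nat.pos_of_ne_zero (NeZero.ne n)⟩⟩
    obtain ⟨b, _, hb⟩ := Finset.exists_max_image (Finset.univ : Finset (Fin n))
      (fun i => v i * G v fS i) Finset.univ_nonempty
    exact ⟨b, Finset.mem_filter.mpr ⟨Finset.mem_univ _, fun j => hb j (Finset.mem_univ _)⟩⟩)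

/-- Consumer surplus of value `v i` under signal `fS`. -/
def cs {n : ℕ} [NeZero n] (v fS : Fin n → ℝ) (i : Fin n) : ℝ :=
  if v (priceIdx v fS) ≤ v i then v i - v (priceIdx v fS) else 0

/-- Revenue of a signal: the maximum of `v i * G i`. -/
def revSig {n : ℕ} [NeZero n] (v fS : Fin n → ℝ) : ℝ :=
  Finset.univ.sup' (by
    haveI : Nonempty (Fin n) := ⟨⟨0, Nat.pos_of_ne_zero (NeZero.ne n)⟩⟩
    exact Finset.univ_nonempty) (fun i => v i * G v fS i)

/-- A signaling scheme for prior mass function `f`. -/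
structure Scheme (n : ℕ) (f : Fin n → ℝ) where
  Q : ℕ
  sig : Fin Q → Fin n → ℝ
  wt : Fin Q → ℝ
  sig_isSignal : ∀ q, IsSignal (sig q)
  wt_nonneg : ∀ q, 0 ≤ wt q
  wt_sum : ∑ q, wt q = 1
  bayes : ∀ i, ∑ q, wt q * sig q i = f i

/-- Expected consumer surplus of value `v i` under scheme `Z`. -/
def csZ {n : ℕ} [NeZero n] (v f : Fin n → ℝ) (Z : Scheme n f) (i : Fin n) : ℝ :=
  ∑ q, cs v (Z.sig q) i * (Z.wt q * Z.sig q i / f i)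

/-- Expected revenue of a scheme. -/
def revZ {n : ℕ} [NeZero n] (v : Fin n → ℝ) {f : Fin n → ℝ} (Z : Scheme n f) : ℝ :=
  ∑ q, Z.wt q * revSig v (Z.sig q)

/-- A scheme is efficient if on every positive-weight signal, the smallest value
in the support maximizes `v * G`. -/
def Efficient {n : ℕ} (v : Fin n → ℝ) {f : Fin n → ℝ} (Z : Scheme n f) : Prop :=
  ∀ q, 0 < Z.wt q → ∀ i, (0 < Z.sig q i ∧ ∀ j, 0 < Z.sig q j → i ≤ j) →
    ∀ j, v j * G v (Z.sig q) j ≤ v i * G v (Z.sig q) i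

/-- A scheme is monotone if higher values get (weakly) higher expected surplus. -/
def MonotoneScheme {n : ℕ} [NeZero n] (v f : Fin n → ℝ) (Z : Scheme n f) : Prop :=
  ∀ i j : Fin n, v i < v j → csZ v f Z i ≤ csZ v f Z j

/-- A scheme is buyer-optimal if the total expected consumer surplus equals the
expected value minus the Myerson revenue. -/
def BuyerOptimal {n : ℕ} [NeZero n] (v f : Fin n → ℝ) (Z : Scheme n f) : Prop :=
  ∑ i, f i * csZ v f Z i = (∑ i, f i * v i) - revSig v f

/-- The surplus-mass step function of a scheme: equal to `csZ i` on the quantile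
interval `(F(v_{i-1}), F(v_i)]`. -/
def smf {n : ℕ} [NeZero n] (v f : Fin n → ℝ) (Z : Scheme n f) (x : ℝ) : ℝ :=
  ∑ i, if (∑ j ∈ Finset.univ.filter (fun j => j < i), f j) < x ∧
          x ≤ ∑ j ∈ Finset.univ.filter (fun j => j ≤ i), f j
       then csZ v f Z i else 0

/-- Sorted `m`-prefix sum of `g` on `(0,1]`: the infimum of `∫_T g` over
(measurable) subsets `T` of `(0,1]` of total length `m`. -/
def PF (g : ℝ → ℝ) (m : ℝ) : ℝ :=
  sInf { r : ℝ | ∃ T : Set ℝ, T ⊆ Set.Ioc 0 1 ∧ MeasurableSet T ∧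
    volume T = ENNReal.ofReal m ∧ r = ∫ x in T, g x }

/-- Integration `m`-prefix sum of `g`: `∫₀^m g`. -/
def PFV (g : ℝ → ℝ) (m : ℝ) : ℝ := ∫ x in Set.Ioc (0:ℝ) m, g x

/-- A singleton signal puts all mass on one value. -/
def IsSingleton {n : ℕ} (fS : Fin n → ℝ) : Prop :=
  ∃ i : Fin n, fS = fun j => if j = i then 1 else 0

/-- An equal-revenue binary signal on `v i < v j` puts mass `1 - v i / v j` on
`v i` and `v i / v j` on `v j`. -/
def IsEqRevBinary {n : ℕ} (v : Fin n → ℝ) (fS : Fin n → ℝ) : Prop :=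
  ∃ i j : Fin n, v i < v j ∧
    fS = fun l => if l = i then 1 - v i / v j else if l = j then v i / v j else 0

/-- `i` is the smallest value in the support of `fS`. -/
def MinSupp {n : ℕ} (fS : Fin n → ℝ) (i : Fin n) : Prop :=
  0 < fS i ∧ ∀ j, 0 < fS j → i ≤ j

end



set_option linter.unusedSectionVars false

set_option maxHeartbeats 1000000

noncomputable section Aux

variable {n : ℕ}

def Fj (f : Fin n → ℝ) (j : ℕ) : Finset (Fin n) :=
  Finset.univ.filter (fun k => j ≤ (k : ℕ) ∧ 0 < f k)

def cN (v f : Fin n → ℝ) (m : Fin n) (j : ℕ) : ℝ :=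
  if h : (Fj f j).Nonempty then v m / v ((Fj f j).min' h) else 0

def mu (v f : Fin n → ℝ) (m : Fin n) (i : Fin n) : ℝ :=
  cN v f m i - cN v f m ((i : ℕ) + 1)

lemma mem_Fj {f : Fin n → ℝ} {j : ℕ} {k : Fin n} :
    k ∈ Fj f j ↔ j ≤ (k : ℕ) ∧ 0 < f k := by
  simp [Fj]

lemma G_eq (v : Fin n → ℝ) (hv : StrictMono v) (g : Fin n → ℝ) (i : Fin n) :
    G v g i = ∑ j ∈ Finset.univ.filter (fun j => i ≤ j), g j := by
  unfold G
  refine Finset.sum_congr ?_ (fun _ _ => rfl)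
  apply Finset.filter_congr
  intro j _
  simp [hv.le_iff_le]

lemma cN_congr (v f : Fin n → ℝ) (m : Fin n) {a b : ℕ} (h : Fj f a = Fj f b) :
    cN v f m a = cN v f m b := by
  unfold cN
  simp only [h]

lemma cN_eq_of_mem (v f : Fin n → ℝ) (m : Fin n) {i : Fin n} (hi : 0 < f i) :
    cN v f m (i : ℕ) = v m / v i := by
  have hne : (Fj f (i : ℕ)).Nonempty := ⟨i, mem_Fj.mpr ⟨le_refl _, hi⟩⟩
  have hmin : (Fj f (i : ℕ)).min' hne = i := by
    refine le_antisymm (Finset.min'_le _ _ (mem_Fj.mpr ⟨le_refl _, hi⟩)) ?_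
    refine Finset.le_min' _ _ _ (fun k hk => ?_)
    exact Fin.le_def.mpr (mem_Fj.mp hk).1
  rw [cN, dif_pos hne, hmin]


section WithHyp

variable {v f : Fin n → ℝ} {m : Fin n}
variable (hv : StrictMono v) (hvpos : ∀ i, 0 < v i)
variable (hm : 0 < f m) (hmin : ∀ k, 0 < f k → m ≤ k)

include hvpos in
lemma cN_nonneg (j : ℕ) : 0 ≤ cN v f m j := by
  unfold cN
  split
  · exact le_of_lt (div_pos (hvpos m) (hvpos _))
  · exact le_refl 0

include hv hvpos hmin in
lemma cN_le_one (j : ℕ) : cN v f m j ≤ 1 := by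
  unfold cN
  split
  case isTrue h =>
    have hk := Finset.min'_mem _ h
    have hmk : m ≤ (Fj f j).min' h := hmin _ (mem_Fj.mp hk).2
    have := hv.le_iff_le.mpr hmk
    exact div_le_one_of_le₀ this (le_of_lt (hvpos _))
  case isFalse => exact zero_le_one

include hv hvpos hmin in
lemma cN_anti {a b : ℕ} (hab : a ≤ b) : cN v f m b ≤ cN v f m a := by
  unfold cN
  split
  case isTrue hb =>
    have hsub : Fj f b ⊆ Fj f a := by
      intro k hk
      exact mem_Fj.mpr ⟨le_trans hab (mem_Fj.mp hk).1, (mem_Fj.mp hk).2⟩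
    have ha : (Fj f a).Nonempty := ⟨_, hsub (Finset.min'_mem _ hb)⟩
    rw [dif_pos ha]
    have h1 : (Fj f a).min' ha ≤ (Fj f b).min' hb :=
      Finset.min'_le _ _ (hsub (Finset.min'_mem _ hb))
    exact div_le_div_of_nonneg_left (le_of_lt (hvpos m)) (hvpos _) (hv.le_iff_le.mpr h1)
  case isFalse hb =>
    split
    · exact le_of_lt (div_pos (hvpos m) (hvpos _))
    · exact le_refl 0

include hvpos hm hmin in
lemma cN_eq_one_of_le {j : ℕ} (hj : j ≤ (m : ℕ)) : cN v f m j = 1 := by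
  have hne : (Fj f j).Nonempty := ⟨m, mem_Fj.mpr ⟨hj, hm⟩⟩
  have hminm : (Fj f j).min' hne = m := by
    refine le_antisymm (Finset.min'_le _ _ (mem_Fj.mpr ⟨hj, hm⟩)) ?_
    exact Finset.le_min' _ _ _ (fun k hk => hmin _ (mem_Fj.mp hk).2)
  rw [cN, dif_pos hne, hminm, div_self (ne_of_gt (hvpos m))]

lemma cN_top {j : ℕ} (hj : n ≤ j) : cN v f m j = 0 := by
  rw [cN, dif_neg]
  rintro ⟨k, hk⟩
  have := (mem_Fj.mp hk).1
  have := k.isLt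
  omega

include hv hvpos hmin in
lemma mu_nonneg (i : Fin n) : 0 ≤ mu v f m i :=
  sub_nonneg.mpr (cN_anti hv hvpos hmin (Nat.le_succ _))

include hv in
lemma sum_mu_tail (i : Fin n) :
    ∑ j ∈ Finset.univ.filter (fun j => i ≤ j), mu v f m j = cN v f m (i : ℕ) := by
  rw [Finset.sum_filter]
  have h1 : ∀ j : Fin n, (if i ≤ j then mu v f m j else 0)
      = (fun l : ℕ => if (i : ℕ) ≤ l then cN v f m l - cN v f m (l + 1) else 0) (j : ℕ) := by
    intro j
    simp only [Fin.le_def, mu]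
  rw [Finset.sum_congr rfl (fun j _ => h1 j)]
  rw [Fin.sum_univ_eq_sum_range (fun l : ℕ => if (i : ℕ) ≤ l then cN v f m l - cN v f m (l + 1) else 0) n]
  rw [← Finset.sum_filter]
  have h2 : (Finset.range n).filter (fun l => (i : ℕ) ≤ l) = Finset.Ico (i : ℕ) n := by
    ext l
    simp only [Finset.mem_filter, Finset.mem_range, Finset.mem_Ico]
    omega
  rw [h2]
  rw [Finset.sum_Ico_eq_sub _ (le_of_lt i.isLt), Finset.sum_range_sub' (cN v f m),
    Finset.sum_range_sub' (cN v f m), cN_top (le_refl n)]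
  ring

include hv in
lemma G_mu (i : Fin n) : G v (mu v f m) i = cN v f m (i : ℕ) := by
  rw [G_eq v hv, sum_mu_tail hv]

include hv hvpos hmin in
lemma v_mul_cN_le (i : Fin n) : v i * cN v f m (i : ℕ) ≤ v m := by
  unfold cN
  split
  case isTrue h =>
    have hk := Finset.min'_mem _ h
    have hik : i ≤ (Fj f (i : ℕ)).min' h := Fin.le_def.mpr (mem_Fj.mp hk).1
    rw [mul_div_assoc']
    rw [div_le_iff₀ (hvpos _)]
    have := hv.le_iff_le.mpr hik
    nlinarith [hvpos m, hvpos i, hvpos ((Fj f (i : ℕ)).min' h)]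
  case isFalse =>
    simp [le_of_lt (hvpos m)]

include hv hvpos in
lemma mu_pos_of (i : Fin n) (hi : 0 < f i) : 0 < mu v f m i := by
  have h1 : cN v f m (i : ℕ) = v m / v i := cN_eq_of_mem v f m hi
  have h2 : cN v f m ((i : ℕ) + 1) < v m / v i := by
    unfold cN
    split
    case isTrue h =>
      have hk := Finset.min'_mem _ h
      have : (i : ℕ) + 1 ≤ ((Fj f ((i : ℕ) + 1)).min' h : ℕ) := (mem_Fj.mp hk).1
      have hik : i < (Fj f ((i : ℕ) + 1)).min' h := by
        rw [Fin.lt_def]; omega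
      exact div_lt_div_of_pos_left (hvpos m) (hvpos i) (hv hik)
    case isFalse => exact div_pos (hvpos m) (hvpos i)
  rw [mu, h1]
  linarith

lemma mu_zero_of (i : Fin n) (hi : ¬ 0 < f i) : mu v f m i = 0 := by
  have hset : Fj f (i : ℕ) = Fj f ((i : ℕ) + 1) := by
    ext k
    simp only [mem_Fj]
    constructor
    · rintro ⟨h1, h2⟩
      refine ⟨?_, h2⟩
      have : k ≠ i := fun h => hi (h ▸ h2)
      have : (k : ℕ) ≠ (i : ℕ) := fun h => this (Fin.ext h)
      omega
    · rintro ⟨h1, h2⟩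
      exact ⟨by omega, h2⟩
  rw [mu, cN_congr v f m hset, sub_self]

lemma tail_eq_of_nonempty (g : Fin n → ℝ) (hg : ∀ j, g j ≠ 0 → 0 < f j) (i : Fin n)
    (h : (Fj f (i : ℕ)).Nonempty) :
    ∑ j ∈ Finset.univ.filter (fun j => i ≤ j), g j
      = ∑ j ∈ Finset.univ.filter (fun j => (Fj f (i : ℕ)).min' h ≤ j), g j := by
  set k := (Fj f (i : ℕ)).min' h with hk
  have hik : i ≤ k := Fin.le_def.mpr (mem_Fj.mp (Finset.min'_mem _ h)).1
  refine (Finset.sum_subset ?_ ?_).symm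
  · intro j hj
    simp only [Finset.mem_filter, Finset.mem_univ, true_and] at *
    exact le_trans hik hj
  · intro j hj1 hj2
    simp only [Finset.mem_filter, Finset.mem_univ, true_and] at hj1 hj2
    by_contra hne
    have hfj : 0 < f j := hg j hne
    have : j ∈ Fj f (i : ℕ) := mem_Fj.mpr ⟨Fin.le_def.mp hj1, hfj⟩
    exact hj2 (Finset.min'_le _ _ this)

lemma tail_zero_of_empty (g : Fin n → ℝ) (hg : ∀ j, g j ≠ 0 → 0 < f j) (i : Fin n)
    (h : ¬ (Fj f (i : ℕ)).Nonempty) :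
    ∑ j ∈ Finset.univ.filter (fun j => i ≤ j), g j = 0 := by
  refine Finset.sum_eq_zero (fun j hj => ?_)
  simp only [Finset.mem_filter, Finset.mem_univ, true_and] at hj
  by_contra hne
  exact h ⟨j, mem_Fj.mpr ⟨Fin.le_def.mp hj, hg j hne⟩⟩

end WithHyp

end Aux

lemma div_le_div_of_nonneg_right' {a b c : ℝ} (h : a ≤ b) (hc : 0 < c) : a / c ≤ b / c := by
  rw [div_le_div_iff₀ hc hc]
  nlinarith

lemma le_revSig {n : ℕ} [NeZero n] (v g : Fin n → ℝ) (i : Fin n) :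
    v i * G v g i ≤ revSig v g := by
  unfold revSig
  exact Finset.le_sup' (fun j => v j * G v g j) (Finset.mem_univ i)

lemma revSig_le {n : ℕ} [NeZero n] {v g : Fin n → ℝ} {B : ℝ} (h : ∀ i, v i * G v g i ≤ B) :
    revSig v g ≤ B := by
  unfold revSig
  exact Finset.sup'_le _ _ (fun i _ => h i)

lemma exists_revSig {n : ℕ} [NeZero n] (v g : Fin n → ℝ) :
    ∃ i, revSig v g = v i * G v g i := by
  unfold revSig
  obtain ⟨i, _, h⟩ := Finset.exists_mem_eq_sup' (by
    haveI : Nonempty (Fin n) := ⟨⟨0, Nat.pos_of_ne_zero (NeZero.ne n)⟩⟩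
    exact Finset.univ_nonempty) (fun i => v i * G v g i)
  exact ⟨i, h⟩

theorem mainPD (n : ℕ) [NeZero n] (v : Fin n → ℝ) (hv : StrictMono v) (hvpos : ∀ i, 0 < v i) :
    ∀ N : ℕ, ∀ f : Fin n → ℝ, (∀ i, 0 ≤ f i) → (∑ i, f i) = 1 →
      (Finset.univ.filter (fun k => 0 < f k)).card ≤ N →
      ∃ Z : Scheme n f, Efficient v Z ∧ revZ v Z = revSig v f := by
  intro N
  induction N with
  | zero =>
    intro f hf0 hsum hcard
    exfalso
    have hex : ∃ i, 0 < f i := by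
      by_contra hno
      push_neg at hno
      have h0 : ∑ i, f i = 0 := Finset.sum_eq_zero (fun i _ => le_antisymm (hno i) (hf0 i))
      rw [hsum] at h0
      norm_num at h0
    obtain ⟨i, hi⟩ := hex
    have hmem : i ∈ Finset.univ.filter (fun k => 0 < f k) :=
      Finset.mem_filter.mpr ⟨Finset.mem_univ _, hi⟩
    have := Finset.card_pos.mpr ⟨i, hmem⟩
    omega
  | succ N ih =>
    intro f hf0 hsum hcard
    have hS : (Finset.univ.filter (fun k => 0 < f k)).Nonempty := by
      by_contra hno
      have hex : ∀ i, ¬ 0 < f i := by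
        intro i hi
        exact hno ⟨i, Finset.mem_filter.mpr ⟨Finset.mem_univ _, hi⟩⟩
      have h0 : ∑ i, f i = 0 := Finset.sum_eq_zero (fun i _ => le_antisymm (not_lt.mp (hex i)) (hf0 i))
      rw [hsum] at h0
      norm_num at h0
    set S := Finset.univ.filter (fun k => 0 < f k) with hSdef
    set m := S.min' hS with hmdef
    have hm : 0 < f m := (Finset.mem_filter.mp (S.min'_mem hS)).2
    have hmin : ∀ k, 0 < f k → m ≤ k := fun k hk =>
      Finset.min'_le S k (Finset.mem_filter.mpr ⟨Finset.mem_univ _, hk⟩)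
    have hGfm : G v f m = 1 := by
      rw [G_eq v hv, ← hsum]
      apply Finset.sum_subset (Finset.filter_subset _ _)
      intro j _ hj
      simp only [Finset.mem_filter, Finset.mem_univ, true_and, not_le] at hj
      by_contra hne
      have : 0 < f j := lt_of_le_of_ne (hf0 j) (Ne.symm hne)
      exact absurd (hmin j this) (not_le.mpr hj)
    have hvmR : v m ≤ revSig v f := by
      have h := le_revSig v f m
      rw [hGfm, mul_one] at h
      exact h
    by_cases hcase : revSig v f ≤ v m
    · -- trivial scheme
      have hcaseeq : revSig v f = v m := le_antisymm hcase hvmR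
      refine ⟨⟨1, fun _ => f, fun _ => 1, fun _ => ⟨hf0, hsum⟩, fun _ => zero_le_one,
        by simp, fun i => by simp⟩, ?_, ?_⟩
      · intro q hq i hi j
        obtain ⟨hi1, hi2⟩ := hi
        have him : i = m := le_antisymm (hi2 m hm) (hmin i hi1)
        show v j * G v f j ≤ v i * G v f i
        rw [him, hGfm, mul_one, ← hcaseeq]
        exact le_revSig v f j
      · show ∑ _q : Fin 1, 1 * revSig v f = revSig v f
        simp
    · have hlt : v m < revSig v f := lt_of_not_ge hcase
      obtain ⟨k₀, hk₀S, hk₀min⟩ := Finset.exists_min_image S (fun k => f k / mu v f m k) hS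
      have hk₀f : 0 < f k₀ := (Finset.mem_filter.mp hk₀S).2
      have hμk₀ : 0 < mu v f m k₀ := mu_pos_of hv hvpos k₀ hk₀f
      set γ := f k₀ / mu v f m k₀ with hγdef
      have hγpos : 0 < γ := div_pos hk₀f hμk₀
      have hγμ : ∀ k, γ * mu v f m k ≤ f k := by
        intro k
        by_cases hk : 0 < f k
        · have hμk : 0 < mu v f m k := mu_pos_of hv hvpos k hk
          have hle : γ ≤ f k / mu v f m k :=
            hk₀min k (Finset.mem_filter.mpr ⟨Finset.mem_univ _, hk⟩)
          calc γ * mu v f m k ≤ (f k / mu v f m k) * mu v f m k := by nlinarith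
            _ = f k := div_mul_cancel₀ _ (ne_of_gt hμk)
        · rw [mu_zero_of k hk, mul_zero]
          exact hf0 k
      have hsumμ : ∑ j, mu v f m j = 1 := by
        have h := sum_mu_tail (v := v) (f := f) (m := m) hv (0 : Fin n)
        have hfilt : Finset.univ.filter (fun j => (0 : Fin n) ≤ j) = Finset.univ := by
          apply Finset.filter_true_of_mem
          intro j _
          exact Fin.le_def.mpr (by simp)
        rw [hfilt] at h
        rw [h]
        exact cN_eq_one_of_le hvpos hm hmin (Nat.zero_le _)
      have hγ1 : γ < 1 := by
        by_contra hge
        push_neg at hge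
        have hfμ : ∀ k, mu v f m k ≤ f k := by
          intro k
          have h1 := hγμ k
          have h2 := mu_nonneg hv hvpos hmin k
          nlinarith
        have hfeq : ∀ k, f k = mu v f m k := by
          have hzero : ∑ k, (f k - mu v f m k) = 0 := by
            rw [Finset.sum_sub_distrib, hsum, hsumμ]; ring
          intro k
          have := (Finset.sum_eq_zero_iff_of_nonneg
            (fun k _ => sub_nonneg.mpr (hfμ k))).mp hzero k (Finset.mem_univ k)
          linarith
        have hcontra : revSig v f ≤ v m := by
          apply revSig_le
          intro i
          calc v i * G v f i = v i * cN v f m (i : ℕ) := by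
                rw [G_eq v hv, Finset.sum_congr rfl (fun j _ => hfeq j), sum_mu_tail hv]
            _ ≤ v m := v_mul_cN_le hv hvpos hmin i
        linarith
      have h1γ : 0 < 1 - γ := by linarith
      set f' : Fin n → ℝ := fun i => (f i - γ * mu v f m i) / (1 - γ) with hf'def
      have hf'0 : ∀ i, 0 ≤ f' i := fun i => div_nonneg (sub_nonneg.mpr (hγμ i)) (le_of_lt h1γ)
      have hf'sum : ∑ i, f' i = 1 := by
        simp only [hf'def]
        rw [← Finset.sum_div, Finset.sum_sub_distrib, ← Finset.mul_sum, hsum, hsumμ]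
        field_simp
      have hf'supp : ∀ i, 0 < f' i → 0 < f i := by
        intro i hi
        by_contra hno
        have hfi : f i = 0 := le_antisymm (not_lt.mp hno) (hf0 i)
        rw [hf'def] at hi
        simp only [mu_zero_of i hno, hfi, mul_zero, sub_zero, zero_div] at hi
        exact lt_irrefl 0 hi
      have hf'k₀ : f' k₀ = 0 := by
        simp only [hf'def, hγdef]
        rw [div_mul_cancel₀ _ (ne_of_gt hμk₀), sub_self, zero_div]
      have hcard' : (Finset.univ.filter (fun k => 0 < f' k)).card ≤ N := by
        have hss : Finset.univ.filter (fun k => 0 < f' k) ⊂ S := by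
          rw [Finset.ssubset_iff_of_subset]
          · exact ⟨k₀, hk₀S, by simp [hf'k₀]⟩
          · intro k hk
            exact Finset.mem_filter.mpr ⟨Finset.mem_univ _,
              hf'supp k (Finset.mem_filter.mp hk).2⟩
        have := Finset.card_lt_card hss
        omega
      obtain ⟨Z', hZ'eff, hZ'rev⟩ := ih f' hf'0 hf'sum hcard'
      have hGf' : ∀ i, G v f' i = (G v f i - γ * cN v f m (i : ℕ)) / (1 - γ) := by
        intro i
        rw [G_eq v hv, G_eq v hv, ← sum_mu_tail (v := v) (f := f) (m := m) hv i]
        rw [← Finset.sum_div, Finset.sum_sub_distrib, ← Finset.mul_sum]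
      have hG0 : ∀ i, 0 ≤ G v f' i := by
        intro i
        rw [G_eq v hv]
        exact Finset.sum_nonneg fun j _ => hf'0 j
      have hf'ne : ∀ j, f' j ≠ 0 → 0 < f j :=
        fun j hj => hf'supp j (lt_of_le_of_ne (hf'0 j) (Ne.symm hj))
      have hfne : ∀ j, f j ≠ 0 → 0 < f j :=
        fun j hj => lt_of_le_of_ne (hf0 j) (Ne.symm hj)
      have hR'le : revSig v f' ≤ (revSig v f - γ * v m) / (1 - γ) := by
        apply revSig_le
        intro i
        by_cases hne : (Fj f (i : ℕ)).Nonempty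
        · set k := (Fj f (i : ℕ)).min' hne with hkdef
          have hkmem := Finset.min'_mem (Fj f (i : ℕ)) hne
          have hkf : 0 < f k := (mem_Fj.mp hkmem).2
          have hik : i ≤ k := Fin.le_def.mpr (mem_Fj.mp hkmem).1
          have hGeq : G v f' i = G v f' k := by
            rw [G_eq v hv, G_eq v hv]
            exact tail_eq_of_nonempty f' hf'ne i hne
          have hvik : v i ≤ v k := hv.le_iff_le.mpr hik
          have hvcN : v k * cN v f m (k : ℕ) = v m := by
            rw [cN_eq_of_mem v f m hkf, mul_div_cancel₀ _ (ne_of_gt (hvpos k))]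
          calc v i * G v f' i = v i * G v f' k := by rw [hGeq]
            _ ≤ v k * G v f' k := mul_le_mul_of_nonneg_right hvik (hG0 k)
            _ = (v k * G v f k - γ * (v k * cN v f m (k : ℕ))) / (1 - γ) := by
                rw [hGf']; ring
            _ = (v k * G v f k - γ * v m) / (1 - γ) := by rw [hvcN]
            _ ≤ (revSig v f - γ * v m) / (1 - γ) := by
                have hnum : v k * G v f k - γ * v m ≤ revSig v f - γ * v m := by
                  have := le_revSig v f k
                  linarith
                exact div_le_div_of_nonneg_right' hnum h1γ
        · have hGf'0 : G v f' i = 0 := by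
            rw [G_eq v hv]
            exact tail_zero_of_empty f' hf'ne i hne
          rw [hGf'0, mul_zero]
          apply div_nonneg _ (le_of_lt h1γ)
          nlinarith [hvpos m]
      have hR'ge : (revSig v f - γ * v m) / (1 - γ) ≤ revSig v f' := by
        obtain ⟨istar, histar⟩ := exists_revSig v f
        have h1 : v istar * G v f' istar
            = (v istar * G v f istar - γ * (v istar * cN v f m (istar : ℕ))) / (1 - γ) := by
          rw [hGf']; ring
        have h2 : v istar * cN v f m (istar : ℕ) ≤ v m := v_mul_cN_le hv hvpos hmin istar
        have h3 := le_revSig v f' istar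
        rw [h1] at h3
        refine le_trans ?_ h3
        have hnum : revSig v f - γ * v m
            ≤ v istar * G v f istar - γ * (v istar * cN v f m (istar : ℕ)) := by
          rw [histar]
          nlinarith
        exact div_le_div_of_nonneg_right' hnum h1γ
      have hR' : revSig v f' = (revSig v f - γ * v m) / (1 - γ) := le_antisymm hR'le hR'ge
      have hμsig : IsSignal (mu v f m) := ⟨mu_nonneg hv hvpos hmin, hsumμ⟩
      have hRμ : revSig v (mu v f m) = v m := by
        apply le_antisymm
        · apply revSig_le
          intro i
          rw [G_mu hv]
          exact v_mul_cN_le hv hvpos hmin i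
        · have h := le_revSig v (mu v f m) m
          rw [G_mu hv, cN_eq_one_of_le hvpos hm hmin (le_refl _), mul_one] at h
          exact h
      refine ⟨⟨Z'.Q + 1, (Fin.cons (mu v f m) Z'.sig : Fin (Z'.Q + 1) → Fin n → ℝ), (Fin.cons γ (fun q => (1 - γ) * Z'.wt q) : Fin (Z'.Q + 1) → ℝ),
        ?_, ?_, ?_, ?_⟩, ?_, ?_⟩
      · intro q
        induction q using Fin.cases with
        | zero => simpa using hμsig
        | succ q => simpa using Z'.sig_isSignal q
      · intro q
        induction q using Fin.cases with
        | zero => simpa using le_of_lt hγpos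
        | succ q =>
          simp only [Fin.cons_succ]
          exact mul_nonneg (le_of_lt h1γ) (Z'.wt_nonneg q)
      · show ∑ q : Fin (Z'.Q + 1), (Fin.cons γ (fun q => (1 - γ) * Z'.wt q) : Fin (Z'.Q + 1) → ℝ) q = 1
        rw [Fin.sum_cons, ← Finset.mul_sum, Z'.wt_sum]
        ring
      · intro i
        show ∑ q : Fin (Z'.Q + 1), (Fin.cons γ (fun q => (1 - γ) * Z'.wt q) : Fin (Z'.Q + 1) → ℝ) q
            * (Fin.cons (mu v f m) Z'.sig : Fin (Z'.Q + 1) → Fin n → ℝ) q i = f i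
        rw [Fin.sum_univ_succ]
        simp only [Fin.cons_zero, Fin.cons_succ]
        have hbz : ∑ q, (1 - γ) * Z'.wt q * Z'.sig q i = (1 - γ) * f' i := by
          rw [← Z'.bayes i, Finset.mul_sum]
          exact Finset.sum_congr rfl fun q _ => by ring
        rw [hbz, hf'def]
        field_simp
        ring
      · -- Efficient
        intro q
        induction q using Fin.cases with
        | zero =>
          intro hq i hi j
          simp only [Fin.cons_zero] at hi ⊢
          obtain ⟨hi1, hi2⟩ := hi
          have hfi : 0 < f i := by
            by_contra hno
            rw [mu_zero_of i hno] at hi1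
            exact lt_irrefl 0 hi1
          have him : i = m := le_antisymm (hi2 m (mu_pos_of hv hvpos m hm)) (hmin i hfi)
          rw [G_mu hv, G_mu hv, him, cN_eq_one_of_le hvpos hm hmin (le_refl _), mul_one]
          exact v_mul_cN_le hv hvpos hmin j
        | succ q =>
          intro hq i hi j
          simp only [Fin.cons_succ] at hq hi ⊢
          have hwq : 0 < Z'.wt q := by
            by_contra hno
            have : (1 - γ) * Z'.wt q ≤ 0 :=
              mul_nonpos_of_nonneg_of_nonpos (le_of_lt h1γ) (not_lt.mp hno)
            linarith
          exact hZ'eff q hwq i hi j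
      · -- revenue
        show ∑ q : Fin (Z'.Q + 1), (Fin.cons γ (fun q => (1 - γ) * Z'.wt q) : Fin (Z'.Q + 1) → ℝ) q
            * revSig v ((Fin.cons (mu v f m) Z'.sig : Fin (Z'.Q + 1) → Fin n → ℝ) q) = revSig v f
        rw [Fin.sum_univ_succ]
        simp only [Fin.cons_zero, Fin.cons_succ]
        rw [hRμ]
        have hrz : ∑ q, (1 - γ) * Z'.wt q * revSig v (Z'.sig q) = (1 - γ) * revZ v Z' := by
          unfold revZ
          rw [Finset.mul_sum]
          exact Finset.sum_congr rfl fun q _ => by ring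
        rw [hrz, hZ'rev, hR']
        field_simp
        ring

theorem stmt4 (n : ℕ) [NeZero n] (v f : Fin n → ℝ)
    (hv : StrictMono v) (hvpos : ∀ i, 0 < v i)
    (hf : ∀ i, 0 < f i) (hsum : ∑ i, f i = 1) :
    ∃ Z : Scheme n f, Efficient v Z ∧ revZ v Z = revSig v f := by
  exact mainPD n v hv hvpos (Finset.univ.filter (fun k => 0 < f k)).card f
    (fun i => le_of_lt (hf i)) hsum (le_refl _)

end PD
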